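/- Let (x_n) be a sequence of nonnegative reals, (λ_i) ⊆ (0,1) with λ_i ↑ 1, and Φ : ℕ → ℕ increasing with (1-λ_i)·Φ(i) ≥ i for all i ≥ 1. If x_n converges to a limit L ∈ [0,+∞], then lim_{i→∞} (1-λ_i)·∑_{n=1}^{Φ(i)} λ_i^n x_n = L. -/

import Mathlib

open scoped ENNReal
open Filter

private lemma geom_Icc_aux (a : ℝ) (ha : a ≠ 1) (m N : ℕ) (h : m ≤ N + 1) :
    (1 - a) * ∑ n ∈ Finset.Icc m N, a ^ n = a ^ m - a ^ (N + 1) := by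
  rw [← Finset.Ico_add_one_right_eq_Icc, geom_sum_Ico ha h]
  have : a - 1 ≠ 0 := sub_ne_zero.mpr ha
  field_simp
  ring

/-- Let `x` be a monotone increasing sequence of nonnegative reals, `λ_i ∈ (0,1)`
with `λ_i ↑ 1`, and `Φ : ℕ → ℕ` increasing with `(1-λ_i)·Φ(i) ≥ i` for all `i ≥ 1`.
If `x_n → L ∈ [0,∞]`, then `(1-λ_i)·∑_{n=1}^{Φ(i)} λ_i^n x_n → L` as `i → ∞`. -/
theorem stmt3 (x : ℕ → ℝ) (hx0 : ∀ n, 0 ≤ x n) (hxmono : Monotone x)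
    (l : ℕ → ℝ) (hl : ∀ i, l i ∈ Set.Ioo (0 : ℝ) 1) (hlmono : Monotone l)
    (hl1 : Filter.Tendsto l Filter.atTop (nhds 1))
    (Φ : ℕ → ℕ) (hΦmono : Monotone Φ)
    (hΦ : ∀ i : ℕ, 1 ≤ i → (i : ℝ) ≤ (1 - l i) * (Φ i : ℝ))
    (L : ℝ≥0∞)
    (hL : Filter.Tendsto (fun n => ENNReal.ofReal (x n)) Filter.atTop (nhds L)) :
    Filter.Tendsto
      (fun i => ENNReal.ofReal ((1 - l i) * ∑ n ∈ Finset.Icc 1 (Φ i), l i ^ n * x n))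
      Filter.atTop (nhds L) := by
  set f : ℕ → ℝ≥0∞ :=
    fun i => ENNReal.ofReal ((1 - l i) * ∑ n ∈ Finset.Icc 1 (Φ i), l i ^ n * x n) with hf
  have hofmono : Monotone fun n => ENNReal.ofReal (x n) :=
    fun a b hab => ENNReal.ofReal_le_ofReal (hxmono hab)
  have hxup : ∀ n, ENNReal.ofReal (x n) ≤ L := hofmono.ge_of_tendsto hL
  have hLsup : L = ⨆ n, ENNReal.ofReal (x n) :=
    tendsto_nhds_unique hL (tendsto_atTop_iSup hofmono)
  -- key real lower bound
  have key : ∀ m i : ℕ, 1 ≤ m → m ≤ Φ i →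
      x m * (l i ^ m - l i ^ (Φ i + 1)) ≤
        (1 - l i) * ∑ n ∈ Finset.Icc 1 (Φ i), l i ^ n * x n := by
    intro m i hm hmΦ
    obtain ⟨hl0, hl1'⟩ := hl i
    have h1l : 0 ≤ 1 - l i := by linarith
    calc x m * (l i ^ m - l i ^ (Φ i + 1))
        = (1 - l i) * ∑ n ∈ Finset.Icc m (Φ i), l i ^ n * x m := by
          rw [← Finset.sum_mul, ← mul_assoc, geom_Icc_aux (l i) (ne_of_lt hl1') m (Φ i)
            (le_trans hmΦ (Nat.le_succ _))]
          ring
      _ ≤ (1 - l i) * ∑ n ∈ Finset.Icc m (Φ i), l i ^ n * x n := by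
          apply mul_le_mul_of_nonneg_left _ h1l
          apply Finset.sum_le_sum
          intro n hn
          exact mul_le_mul_of_nonneg_left (hxmono (Finset.mem_Icc.mp hn).1)
            (pow_nonneg hl0.le n)
      _ ≤ (1 - l i) * ∑ n ∈ Finset.Icc 1 (Φ i), l i ^ n * x n := by
          apply mul_le_mul_of_nonneg_left _ h1l
          apply Finset.sum_le_sum_of_subset_of_nonneg
          · intro n hn
            rw [Finset.mem_Icc] at *
            exact ⟨le_trans hm hn.1, hn.2⟩
          · intro n _ _
            exact mul_nonneg (pow_nonneg hl0.le n) (hx0 n)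
  -- Φ i ≥ i
  have hΦge : ∀ i : ℕ, 1 ≤ i → (i : ℕ) ≤ Φ i := by
    intro i hi
    have h := hΦ i hi
    obtain ⟨hl0, hl1'⟩ := hl i
    have : (i : ℝ) ≤ (Φ i : ℝ) := by
      nlinarith [(Nat.cast_nonneg (Φ i) : (0:ℝ) ≤ (Φ i : ℝ))]
    exact_mod_cast this
  -- l i ^ (Φ i + 1) → 0
  have hpow0 : Tendsto (fun i => l i ^ (Φ i + 1)) atTop (nhds 0) := by
    apply tendsto_of_tendsto_of_tendsto_of_le_of_le'
      (tendsto_const_nhds)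
      (Real.tendsto_exp_neg_atTop_nhds_zero.comp tendsto_natCast_atTop_atTop)
    · exact Eventually.of_forall fun i => pow_nonneg (hl i).1.le _
    · filter_upwards [eventually_ge_atTop 1] with i hi
      obtain ⟨hl0, hl1'⟩ := hl i
      have h1 : l i ^ (Φ i + 1) ≤ l i ^ (Φ i) :=
        pow_le_pow_of_le_one hl0.le hl1'.le (Nat.le_succ _)
      have h2 : l i ≤ Real.exp (-(1 - l i)) := by
        have := Real.add_one_le_exp (-(1 - l i))
        linarith
      have h3 : l i ^ (Φ i) ≤ Real.exp (-(1 - l i)) ^ (Φ i) :=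
        pow_le_pow_left₀ hl0.le h2 _
      have h4 : Real.exp (-(1 - l i)) ^ (Φ i) = Real.exp ((Φ i : ℝ) * -(1 - l i)) :=
        (Real.exp_nat_mul _ _).symm
      have h5 : Real.exp ((Φ i : ℝ) * -(1 - l i)) ≤ Real.exp (-(i : ℝ)) := by
        apply Real.exp_le_exp.mpr
        have := hΦ i hi
        nlinarith
      calc l i ^ (Φ i + 1) ≤ l i ^ (Φ i) := h1
        _ ≤ _ := by rw [← h4] at h5; exact le_trans h3 h5
  -- liminf lower bound for each m ≥ 1
  have hliminf : ∀ m : ℕ, 1 ≤ m → ENNReal.ofReal (x m) ≤ liminf f atTop := by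
    intro m hm
    have hg : Tendsto (fun i => ENNReal.ofReal (x m * (l i ^ m - l i ^ (Φ i + 1))))
        atTop (nhds (ENNReal.ofReal (x m))) := by
      have hreal : Tendsto (fun i => x m * (l i ^ m - l i ^ (Φ i + 1))) atTop
          (nhds (x m * (1 ^ m - 0))) :=
        Tendsto.const_mul _ ((hl1.pow m).sub hpow0)
      simp only [one_pow, sub_zero, mul_one] at hreal
      exact (ENNReal.continuous_ofReal.tendsto _).comp hreal
    have := hg.liminf_eq
    rw [← this]
    exact liminf_le_liminf (by
      filter_upwards [eventually_ge_atTop m, eventually_ge_atTop 1] with i hi hi1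
      exact ENNReal.ofReal_le_ofReal (key m i hm (le_trans hi (hΦge i hi1))))
  refine tendsto_of_le_liminf_of_limsup_le ?_ ?_
  · rw [hLsup]
    apply iSup_le
    intro m
    calc ENNReal.ofReal (x m) ≤ ENNReal.ofReal (x (max m 1)) :=
          ENNReal.ofReal_le_ofReal (hxmono (le_max_left _ _))
      _ ≤ _ := hliminf _ (le_max_right _ _)
  · refine Filter.limsup_le_of_le (by isBoundedDefault) (Eventually.of_forall fun i => ?_)
    rcases eq_top_or_lt_top L with hT | hT
    · rw [hT]; exact le_top
    · obtain ⟨hl0, hl1'⟩ := hl i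
      have hM : ∀ n, x n ≤ L.toReal := by
        intro n
        have := hxup n
        rw [← ENNReal.ofReal_toReal hT.ne] at this
        exact (ENNReal.ofReal_le_ofReal_iff ENNReal.toReal_nonneg).mp this
      have hbound : (1 - l i) * ∑ n ∈ Finset.Icc 1 (Φ i), l i ^ n * x n ≤ L.toReal := by
        have h1l : 0 ≤ 1 - l i := by linarith
        calc (1 - l i) * ∑ n ∈ Finset.Icc 1 (Φ i), l i ^ n * x n
            ≤ (1 - l i) * ∑ n ∈ Finset.Icc 1 (Φ i), l i ^ n * L.toReal := by
              apply mul_le_mul_of_nonneg_left _ h1l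
              exact Finset.sum_le_sum fun n _ =>
                mul_le_mul_of_nonneg_left (hM n) (pow_nonneg hl0.le n)
          _ = ((1 - l i) * ∑ n ∈ Finset.Icc 1 (Φ i), l i ^ n) * L.toReal := by
              rw [← Finset.sum_mul]; ring
          _ = (l i ^ 1 - l i ^ (Φ i + 1)) * L.toReal := by
              rw [geom_Icc_aux (l i) (ne_of_lt hl1') 1 (Φ i) (Nat.one_le_iff_ne_zero.mpr
                (Nat.succ_ne_zero _))]
          _ ≤ 1 * L.toReal := by
              apply mul_le_mul_of_nonneg_right _ ENNReal.toReal_nonneg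
              have : 0 ≤ l i ^ (Φ i + 1) := pow_nonneg hl0.le _
              simp only [pow_one]
              linarith
          _ = L.toReal := one_mul _
      calc f i ≤ ENNReal.ofReal L.toReal := ENNReal.ofReal_le_ofReal hbound
        _ = L := ENNReal.ofReal_toReal hT.ne
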